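/- arXiv:1605.07239 — 2 statements merged into one kernel-verified Lean document; each statement's English description precedes it below -/
import Mathlib

section
/- Let A be an n×n real symmetric matrix (n ≥ 2) all of whose off-diagonal entries are strictly positive. Then the shifted Gershgorin lower bound admits the closed form sup_{x≥0} min_i d_i(A,x) = min_{(k,l)} ((n/2 − k)·s_l + (l − n/2)·s_k)/(l − k), where the minimum is taken over all pairs of integers (k,l) with 1 ≤ k ≤ n/2 < l ≤ n. -/
open Finset



/-- The shifted Gershgorin row function d_i(A,x) = a_{ii} − x − Σ_{j≠i} |a_{ij} − x|. -/
noncomputable def gershLower (n : ℕ) (A : Matrix (Fin n) (Fin n) ℝ) (x : ℝ) (i : Fin n) : ℝ :=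
  A i i - x - ∑ j ∈ Finset.univ.erase i, |A i j - x|

/-- `δ_{i,k} = Σ_{j<k} y_j − Σ_{j≥k} y_j` for the sorted off-diagonal entries `y i` of
row `i` (here `k : Fin n` has paper index `k+1`). -/
noncomputable def deltaIK (n : ℕ) (y : Fin n → Fin (n - 1) → ℝ) (i : Fin n) (k : Fin n) : ℝ :=
  (∑ j ∈ Finset.univ.filter (fun j : Fin (n - 1) => (j : ℕ) < (k : ℕ)), y i j) -
  (∑ j ∈ Finset.univ.filter (fun j : Fin (n - 1) => (k : ℕ) ≤ (j : ℕ)), y i j)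

/-- `s_k = min_i (a_{ii} + δ_{i,k})` (here `k : Fin n` has paper index `k+1`). -/
noncomputable def sK (n : ℕ) (A : Matrix (Fin n) (Fin n) ℝ)
    (y : Fin n → Fin (n - 1) → ℝ) (k : Fin n) : ℝ :=
  ⨅ i : Fin n, (A i i + deltaIK n y i k)



lemma card_filter_val_lt (m k : ℕ) (hk : k ≤ m) :
    ((Finset.univ : Finset (Fin m)).filter fun j : Fin m => (j : ℕ) < k).card = k := by
  apply Finset.card_eq_of_bijective (fun i h => (⟨i, lt_of_lt_of_le h hk⟩ : Fin m))
  · intro a ha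
    simp only [mem_filter, mem_univ, true_and] at ha
    exact ⟨a, ha, rfl⟩
  · intro i h
    simp [h]
  · intro i j hi hj hij
    simpa using congrArg Fin.val hij

lemma mono_filter_lt_iff {m : ℕ} (f : Fin m → ℝ) (hf : Monotone f) (x : ℝ) (j : Fin m) :
    ((j : ℕ) < ((Finset.univ : Finset (Fin m)).filter fun j' => f j' < x).card) ↔ f j < x := by
  constructor
  · intro h
    by_contra hx
    push_neg at hx
    have hsub : ((Finset.univ : Finset (Fin m)).filter fun j' => f j' < x) ⊆
        (Finset.univ : Finset (Fin m)).filter fun j' => (j' : ℕ) < (j : ℕ) := by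
      intro a ha
      simp only [mem_filter, mem_univ, true_and] at ha ⊢
      by_contra hle
      push_neg at hle
      exact absurd (lt_of_le_of_lt (hx.trans (hf (by exact_mod_cast hle))) ha) (lt_irrefl _)
    have := Finset.card_le_card hsub
    rw [card_filter_val_lt m j (le_of_lt j.isLt)] at this
    omega
  · intro h
    have hsub : ((Finset.univ : Finset (Fin m)).filter fun j' : Fin m => (j' : ℕ) < (j : ℕ) + 1) ⊆
        (Finset.univ : Finset (Fin m)).filter fun j' => f j' < x := by
      intro a ha
      simp only [mem_filter, mem_univ, true_and] at ha ⊢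
      exact lt_of_le_of_lt (hf (by exact_mod_cast Nat.lt_succ_iff.mp ha)) h
    have := Finset.card_le_card hsub
    rw [card_filter_val_lt m ((j : ℕ) + 1) j.isLt] at this
    omega

section pieces
variable (n : ℕ) (hn : 2 ≤ n) (A : Matrix (Fin n) (Fin n) ℝ)
  (y : Fin n → Fin (n - 1) → ℝ) (e : ∀ i : Fin n, Fin (n - 1) ≃ {j : Fin n // j ≠ i})
  (hy : ∀ i k, y i k = A i (e i k).1)

include e hy in
lemma row_sum_eq (i : Fin n) (x : ℝ) :
    ∑ j ∈ Finset.univ.erase i, |A i j - x| = ∑ j : Fin (n - 1), |y i j - x| := by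
  have h1 : ∑ j ∈ Finset.univ.erase i, |A i j - x|
      = ∑ j : {j : Fin n // j ≠ i}, |A i j.1 - x| := by
    exact Finset.sum_subtype _ (fun j => by simp) (fun j => |A i j - x|)
  rw [h1, ← Equiv.sum_comp (e i) (fun j : {j : Fin n // j ≠ i} => |A i j.1 - x|)]
  exact Finset.sum_congr rfl (fun k _ => by rw [hy])

include hn in
lemma cardS1 (k : Fin n) :
    (((Finset.univ : Finset (Fin (n-1))).filter fun j : Fin (n-1) => (j : ℕ) < (k : ℕ)).card : ℝ)
      = (k : ℕ) := by
  rw [card_filter_val_lt (n-1) k (by omega : (k:ℕ) ≤ n - 1)]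

include hn in
lemma cardS2 (k : Fin n) :
    (((Finset.univ : Finset (Fin (n-1))).filter fun j : Fin (n-1) => (k : ℕ) ≤ (j : ℕ)).card : ℝ)
      = (n : ℝ) - 1 - (k : ℕ) := by
  have hsplit := Finset.card_filter_add_card_filter_not
    (s := (Finset.univ : Finset (Fin (n-1)))) (p := fun j : Fin (n-1) => (j : ℕ) < (k : ℕ))
  have hc1 : ((Finset.univ : Finset (Fin (n-1))).filter fun j : Fin (n-1) => (j : ℕ) < (k : ℕ)).card
      = (k : ℕ) := card_filter_val_lt (n-1) k (by omega)
  have hnot : ((Finset.univ : Finset (Fin (n-1))).filter fun j : Fin (n-1) => ¬ (j : ℕ) < (k : ℕ))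
      = ((Finset.univ : Finset (Fin (n-1))).filter fun j : Fin (n-1) => (k : ℕ) ≤ (j : ℕ)) := by
    apply Finset.filter_congr; intro j _; simp [not_lt]
  rw [hnot, hc1, Finset.card_univ, Fintype.card_fin] at hsplit
  have h2 : (((Finset.univ : Finset (Fin (n-1))).filter fun j : Fin (n-1) => (k : ℕ) ≤ (j : ℕ)).card)
      = (n - 1) - (k : ℕ) := by omega
  rw [h2]
  have hkn : (k : ℕ) ≤ n - 1 := by omega
  push_cast [Nat.cast_sub hkn, Nat.cast_sub (by omega : 1 ≤ n)]
  ring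

include hn e hy in
lemma piece_le (i : Fin n) (k : Fin n) (x : ℝ) :
    gershLower n A x i ≤ A i i + deltaIK n y i k + ((n : ℝ) - 2 * ((k : ℕ) + 1)) * x := by
  classical
  set S1 := (Finset.univ : Finset (Fin (n-1))).filter (fun j : Fin (n-1) => (j : ℕ) < (k : ℕ)) with hS1
  set S2 := (Finset.univ : Finset (Fin (n-1))).filter (fun j : Fin (n-1) => (k : ℕ) ≤ (j : ℕ)) with hS2
  have hsplit : ∑ j : Fin (n - 1), |y i j - x| = ∑ j ∈ S1, |y i j - x| + ∑ j ∈ S2, |y i j - x| := by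
    rw [hS1, hS2, ← Finset.sum_filter_add_sum_filter_not Finset.univ
      (fun j : Fin (n-1) => (j : ℕ) < (k : ℕ))]
    congr 1
    apply Finset.sum_congr _ (fun _ _ => rfl)
    apply Finset.filter_congr; intro j _; simp [not_lt]
  have h1 : ∑ j ∈ S1, (x - y i j) ≤ ∑ j ∈ S1, |y i j - x| :=
    Finset.sum_le_sum fun j _ => by rw [abs_sub_comm]; exact le_abs_self _
  have h2 : ∑ j ∈ S2, (y i j - x) ≤ ∑ j ∈ S2, |y i j - x| :=
    Finset.sum_le_sum fun j _ => le_abs_self _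
  have e1 : ∑ j ∈ S1, (x - y i j) = (S1.card : ℝ) * x - ∑ j ∈ S1, y i j := by
    rw [Finset.sum_sub_distrib, Finset.sum_const, nsmul_eq_mul]
  have e2 : ∑ j ∈ S2, (y i j - x) = ∑ j ∈ S2, y i j - (S2.card : ℝ) * x := by
    rw [Finset.sum_sub_distrib, Finset.sum_const, nsmul_eq_mul]
  have hc1 : (S1.card : ℝ) = (k : ℕ) := cardS1 n hn k
  have hc2 : (S2.card : ℝ) = (n : ℝ) - 1 - (k : ℕ) := cardS2 n hn k
  rw [hc1] at e1
  rw [hc2] at e2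
  rw [gershLower, row_sum_eq n A y e hy, deltaIK, hsplit, ← hS1, ← hS2]
  linarith [h1, h2]

include hn e hy in
lemma piece_eq (i : Fin n) (hmono : Monotone (y i)) (x : ℝ) (hx : 0 ≤ x) :
    ∃ k : Fin n, gershLower n A x i
      = A i i + deltaIK n y i k + ((n : ℝ) - 2 * ((k : ℕ) + 1)) * x := by
  classical
  set c := ((Finset.univ : Finset (Fin (n-1))).filter fun j : Fin (n-1) => y i j < x).card with hc
  have hcle : c ≤ n - 1 := by
    rw [hc]; exact le_trans (Finset.card_filter_le _ _) (by simp)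
  refine ⟨⟨c, by omega⟩, ?_⟩
  set k : Fin n := ⟨c, by omega⟩ with hk
  have hchar : ∀ j : Fin (n-1), ((j : ℕ) < (k : ℕ) ↔ y i j < x) := by
    intro j
    simpa using mono_filter_lt_iff (y i) hmono x j
  set S1 := (Finset.univ : Finset (Fin (n-1))).filter (fun j : Fin (n-1) => (j : ℕ) < (k : ℕ)) with hS1
  set S2 := (Finset.univ : Finset (Fin (n-1))).filter (fun j : Fin (n-1) => (k : ℕ) ≤ (j : ℕ)) with hS2
  have hsplit : ∑ j : Fin (n - 1), |y i j - x| = ∑ j ∈ S1, |y i j - x| + ∑ j ∈ S2, |y i j - x| := by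
    rw [hS1, hS2, ← Finset.sum_filter_add_sum_filter_not Finset.univ
      (fun j : Fin (n-1) => (j : ℕ) < (k : ℕ))]
    congr 1
    apply Finset.sum_congr _ (fun _ _ => rfl)
    apply Finset.filter_congr; intro j _; simp [not_lt]
  have h1 : ∑ j ∈ S1, |y i j - x| = ∑ j ∈ S1, (x - y i j) := by
    apply Finset.sum_congr rfl
    intro j hj
    rw [hS1, Finset.mem_filter] at hj
    have : y i j < x := (hchar j).mp hj.2
    rw [abs_of_neg (by linarith)]; ring
  have h2 : ∑ j ∈ S2, |y i j - x| = ∑ j ∈ S2, (y i j - x) := by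
    apply Finset.sum_congr rfl
    intro j hj
    rw [hS2, Finset.mem_filter] at hj
    have : ¬ ((j:ℕ) < (k:ℕ)) := by omega
    have hxy : x ≤ y i j := le_of_not_gt (fun h => this ((hchar j).mpr h))
    exact abs_of_nonneg (by linarith)
  have e1 : ∑ j ∈ S1, (x - y i j) = (S1.card : ℝ) * x - ∑ j ∈ S1, y i j := by
    rw [Finset.sum_sub_distrib, Finset.sum_const, nsmul_eq_mul]
  have e2 : ∑ j ∈ S2, (y i j - x) = ∑ j ∈ S2, y i j - (S2.card : ℝ) * x := by
    rw [Finset.sum_sub_distrib, Finset.sum_const, nsmul_eq_mul]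
  have hc1 : (S1.card : ℝ) = (k : ℕ) := cardS1 n hn k
  have hc2 : (S2.card : ℝ) = (n : ℝ) - 1 - (k : ℕ) := cardS2 n hn k
  rw [hc1] at e1
  rw [hc2] at e2
  rw [gershLower, row_sum_eq n A y e hy, deltaIK, hsplit, ← hS1, ← hS2, h1, h2]
  linarith []

end pieces

section lines
variable (n : ℕ) (hn : 2 ≤ n) (s : Fin n → ℝ)

/-- slope of the k-th line -/
noncomputable def slopeL (n : ℕ) (k : Fin n) : ℝ := (n : ℝ) - 2 * ((k : ℕ) + 1)

noncomputable def lineL (n : ℕ) (s : Fin n → ℝ) (k : Fin n) (x : ℝ) : ℝ := s k + slopeL n k * x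

lemma slope_lb (k : Fin n) : -(n : ℝ) ≤ slopeL n k := by
  have := k.isLt
  have : ((k : ℕ) : ℝ) + 1 ≤ (n : ℝ) := by exact_mod_cast Nat.succ_le_of_lt k.isLt
  rw [slopeL]; linarith

lemma slope_ub (k : Fin n) : slopeL n k ≤ (n : ℝ) := by
  have : (0:ℝ) ≤ ((k : ℕ) : ℝ) := Nat.cast_nonneg _
  rw [slopeL]; linarith

set_option maxHeartbeats 1600000 in
include hn in
lemma lines_sup_eq (k0 : Fin n) (hk0 : (k0 : ℕ) = 0)
    (hs : ∀ k : Fin n, k ≠ k0 → s k0 < s k) :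
    (⨆ x : {x : ℝ // 0 ≤ x}, ⨅ k : Fin n, lineL n s k x.1) =
    ⨅ p : {p : Fin n × Fin n //
        ((p.1 : ℕ) + 1 : ℝ) ≤ (n : ℝ) / 2 ∧ (n : ℝ) / 2 < ((p.2 : ℕ) + 1 : ℝ)},
      (((n : ℝ) / 2 - ((p.1.1 : ℕ) + 1)) * s p.1.2 +
        (((p.1.2 : ℕ) + 1) - (n : ℝ) / 2) * s p.1.1) /
        ((((p.1.2 : ℕ) + 1) : ℝ) - (((p.1.1 : ℕ) + 1) : ℝ)) := by
  classical
  haveI : NeZero n := ⟨by omega⟩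
  set g : ℝ → ℝ := fun x => ⨅ k : Fin n, lineL n s k x with hg
  have hbdd : ∀ x : ℝ, BddBelow (Set.range fun k : Fin n => lineL n s k x) :=
    fun x => (Set.finite_range _).bddBelow
  have hgle : ∀ (x : ℝ) (k : Fin n), g x ≤ lineL n s k x := fun x k => ciInf_le (hbdd x) k
  have hgex : ∀ x : ℝ, ∃ k : Fin n, g x = lineL n s k x := by
    intro x
    obtain ⟨k0, hk0⟩ := Finite.exists_min (fun k : Fin n => lineL n s k x)
    exact ⟨k0, le_antisymm (hgle x k0) (le_ciInf hk0)⟩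
  -- last line
  set kl : Fin n := ⟨n - 1, by omega⟩ with hkl
  have hkl_cast : ((kl : ℕ) : ℝ) + 1 = (n : ℝ) := by
    rw [hkl]; push_cast [Nat.cast_sub (by omega : 1 ≤ n)]; ring
  have hslope_last : slopeL n kl = -(n : ℝ) := by rw [slopeL, hkl_cast]; ring
  -- Lipschitz continuity of g
  have hlip : ∀ x z : ℝ, g x ≤ g z + (n : ℝ) * |x - z| := by
    intro x z
    obtain ⟨k, hk⟩ := hgex z
    have h1 : g x ≤ lineL n s k x := hgle x k
    have h2 : lineL n s k x = lineL n s k z + slopeL n k * (x - z) := by rw [lineL, lineL]; ring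
    have h3 : slopeL n k * (x - z) ≤ (n : ℝ) * |x - z| := by
      have ha : slopeL n k * (x - z) ≤ |slopeL n k| * |x - z| := by
        rw [← abs_mul]; exact le_abs_self _
      have hb : |slopeL n k| ≤ (n : ℝ) := abs_le.mpr ⟨slope_lb n k, slope_ub n k⟩
      exact ha.trans (mul_le_mul_of_nonneg_right hb (abs_nonneg _))
    rw [hk]; linarith
  have hcont : Continuous g := by
    have : LipschitzWith (n : NNReal) g := by
      apply LipschitzWith.of_dist_le_mul
      intro x z
      rw [Real.dist_eq, Real.dist_eq]
      rw [abs_sub_le_iff]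
      constructor
      · have := hlip x z; push_cast; linarith
      · have := hlip z x; push_cast; rw [abs_sub_comm]; linarith
    exact this.continuous
  -- choose B and a maximizer on [0, B]
  set B : ℝ := max 0 ((s kl - g 0) / n) + 1 with hB
  have hnpos : (0:ℝ) < n := by positivity
  have hB0 : 0 ≤ B := by positivity
  have hfar : ∀ z : ℝ, B ≤ z → g z ≤ g 0 := by
    intro z hz
    have h1 : g z ≤ s kl + -(n:ℝ) * z := by
      have := hgle z kl; rwa [lineL, hslope_last] at this
    have h2 : (s kl - g 0) / n ≤ B - 1 := by rw [hB]; simp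
    have h3 : s kl - g 0 ≤ n * (B - 1) := by
      rw [div_le_iff₀ hnpos] at h2; linarith
    nlinarith
  obtain ⟨xs, hxs_mem, hxs_max⟩ := (isCompact_Icc (a := (0:ℝ)) (b := B)).exists_isMaxOn
    ⟨0, Set.left_mem_Icc.mpr hB0⟩ hcont.continuousOn
  rw [isMaxOn_iff] at hxs_max
  set m : ℝ := g xs with hm
  have hxs0 : 0 ≤ xs := hxs_mem.1
  have hglobal : ∀ z : ℝ, 0 ≤ z → g z ≤ m := by
    intro z hz
    by_cases hzB : z ≤ B
    · exact hxs_max z ⟨hz, hzB⟩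
    · exact (hfar z (le_of_lt (not_le.mp hzB))).trans
        (hxs_max 0 (Set.left_mem_Icc.mpr hB0))
  -- the pair subtype
  haveI hPne : Nonempty {p : Fin n × Fin n //
      ((p.1 : ℕ) + 1 : ℝ) ≤ (n : ℝ) / 2 ∧ (n : ℝ) / 2 < ((p.2 : ℕ) + 1 : ℝ)} := by
    refine ⟨⟨(k0, kl), ?_, ?_⟩⟩
    · rw [hk0]; push_cast; linarith [show (2:ℝ) ≤ n by exact_mod_cast hn]
    · rw [hkl_cast]; linarith [show (2:ℝ) ≤ n by exact_mod_cast hn]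
  haveI hxne : Nonempty {x : ℝ // 0 ≤ x} := ⟨⟨0, le_refl 0⟩⟩
  have hsup : (⨆ x : {x : ℝ // 0 ≤ x}, ⨅ k : Fin n, lineL n s k x.1) = m := by
    apply le_antisymm
    · exact ciSup_le (fun x => hglobal x.1 x.2)
    · exact le_ciSup (f := fun x : {x : ℝ // 0 ≤ x} => g x.1)
        ⟨m, by rintro _ ⟨x, rfl⟩; exact hglobal x.1 x.2⟩ ⟨xs, hxs0⟩
  rw [hsup]
  have hn2 : (2:ℝ) ≤ (n:ℝ) := by exact_mod_cast hn
  apply le_antisymm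
  · -- m ≤ every pair value
    apply le_ciInf
    rintro ⟨⟨k, l⟩, hkc, hlc⟩
    simp only at hkc hlc ⊢
    have hden : (0:ℝ) < (((l : ℕ) + 1 : ℝ)) - (((k : ℕ) + 1 : ℝ)) := by linarith
    rw [le_div_iff₀ hden]
    have h1 : m ≤ s k + ((n:ℝ) - 2 * ((k : ℕ) + 1)) * xs := hgle xs k
    have h2 : m ≤ s l + ((n:ℝ) - 2 * ((l : ℕ) + 1)) * xs := hgle xs l
    nlinarith [mul_le_mul_of_nonneg_left h1 (by linarith : (0:ℝ) ≤ ((l : ℕ) + 1 : ℝ) - (n:ℝ)/2),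
      mul_le_mul_of_nonneg_left h2 (by linarith : (0:ℝ) ≤ (n:ℝ)/2 - ((k : ℕ) + 1 : ℝ))]
  · -- some pair value ≤ m
    have hpair : ∃ p : {p : Fin n × Fin n //
        ((p.1 : ℕ) + 1 : ℝ) ≤ (n : ℝ) / 2 ∧ (n : ℝ) / 2 < ((p.2 : ℕ) + 1 : ℝ)},
        (((n : ℝ) / 2 - ((p.1.1 : ℕ) + 1)) * s p.1.2 +
          (((p.1.2 : ℕ) + 1) - (n : ℝ) / 2) * s p.1.1) /
          ((((p.1.2 : ℕ) + 1) : ℝ) - (((p.1.1 : ℕ) + 1) : ℝ)) ≤ m := by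
      by_cases hA : ∃ k : Fin n, lineL n s k xs = m ∧ slopeL n k = 0
      · obtain ⟨k, hk, hsl0⟩ := hA
        have hkp : ((k : ℕ) : ℝ) + 1 = (n:ℝ)/2 := by rw [slopeL] at hsl0; linarith
        have hsk : s k = m := by rw [lineL, hsl0] at hk; linarith
        refine ⟨⟨(k, kl), by rw [hkp], by rw [hkl_cast]; linarith⟩, ?_⟩
        simp only [hkl_cast, hkp, hsk]
        rw [div_le_iff₀ (by linarith : (0:ℝ) < (n:ℝ) - (n:ℝ)/2)]
        ring_nf
        linarith
      · by_cases hN : ∃ l : Fin n, lineL n s l xs = m ∧ slopeL n l < 0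
        · obtain ⟨l, hl, hslneg⟩ := hN
          by_cases hP : ∃ k : Fin n, lineL n s k xs = m ∧ 0 < slopeL n k
          · obtain ⟨k, hk, hslpos⟩ := hP
            rw [slopeL] at hslpos hslneg
            refine ⟨⟨(k, l), by linarith, by linarith⟩, ?_⟩
            have hden : (0:ℝ) < (((l : ℕ) + 1 : ℝ)) - (((k : ℕ) + 1 : ℝ)) := by linarith
            have hsk : s k = m - ((n:ℝ) - 2 * ((k : ℕ) + 1)) * xs := by
              rw [lineL, slopeL] at hk; linarith
            have hsl2 : s l = m - ((n:ℝ) - 2 * ((l : ℕ) + 1)) * xs := by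
              rw [lineL, slopeL] at hl; linarith
            simp only
            rw [div_le_iff₀ hden, hsk, hsl2]
            ring_nf
            nlinarith [sq_nonneg xs]
          · -- all active slopes negative; derive contradiction
            exfalso
            push_neg at hA hP
            by_cases hx0 : xs = 0
            · obtain ⟨k1, hk1⟩ := hgex xs
              have hact : lineL n s k1 xs = m := hk1.symm
              have hne : k1 ≠ k0 → False := by
                intro hne
                have h1 : lineL n s k0 xs = s k0 := by
                  rw [lineL, hx0]; ring
                have h2 : s k0 < s k1 := hs k1 hne
                have h3 : lineL n s k1 xs = s k1 := by rw [lineL, hx0]; ring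
                have := hgle xs k0
                rw [h1] at this
                rw [h3] at hact
                linarith
              have hk1k0 : k1 = k0 := by_contra (fun h => hne h)
              have hsl : slopeL n k0 = (n:ℝ) - 2 := by rw [slopeL, hk0]; push_cast; ring
              rcases lt_trichotomy (slopeL n k0) 0 with h | h | h
              · rw [hsl] at h; linarith
              · exact hA k0 (by rw [← hk1k0]; exact hact) h
              · exact absurd h (not_lt.mpr (hP k0 (by rw [← hk1k0]; exact hact)))
            · have hxpos : 0 < xs := lt_of_le_of_ne hxs0 (Ne.symm hx0)
              set T := Finset.univ.filter (fun k : Fin n => lineL n s k xs ≠ m) with hT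
              rcases T.eq_empty_or_nonempty with hTe | hTne
              · -- all lines active; line k0 has slope n-2 ≥ 0
                have hk0act : lineL n s k0 xs = m := by
                  by_contra hne
                  have : k0 ∈ T := by rw [hT]; simp [hne]
                  rw [hTe] at this; exact absurd this (Finset.notMem_empty _)
                have hsl : slopeL n k0 = (n:ℝ) - 2 := by rw [slopeL, hk0]; push_cast; ring
                rcases lt_trichotomy (slopeL n k0) 0 with h | h | h
                · rw [hsl] at h; linarith
                · exact hA k0 hk0act h
                · exact absurd h (not_lt.mpr (hP k0 hk0act))
              · set δ : ℝ := T.inf' hTne (fun k => lineL n s k xs - m) with hδ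
                have hδpos : 0 < δ := by
                  rw [hδ, Finset.lt_inf'_iff]
                  intro k hk
                  rw [hT, Finset.mem_filter] at hk
                  have := hgle xs k
                  rcases lt_or_eq_of_le this with h | h
                  · linarith
                  · exact absurd h.symm hk.2
                set ε : ℝ := min xs (δ / ((n:ℝ) + 1)) with hε
                have hεpos : 0 < ε := lt_min hxpos (by positivity)
                have hεxs : ε ≤ xs := min_le_left _ _
                have hεδ : (n:ℝ) * ε < δ := by
                  have h1 : ε ≤ δ / ((n:ℝ) + 1) := min_le_right _ _
                  have h2 : (n:ℝ) * ε ≤ (n:ℝ) * (δ / ((n:ℝ) + 1)) :=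
                    mul_le_mul_of_nonneg_left h1 (by positivity)
                  have h3 : (n:ℝ) * (δ / ((n:ℝ) + 1)) < δ := by
                    have he : (n:ℝ) * (δ / ((n:ℝ)+1)) = ((n:ℝ)/((n:ℝ)+1)) * δ := by ring
                    have hfrac : (n:ℝ) / ((n:ℝ)+1) < 1 :=
                      (div_lt_one (by linarith)).mpr (by linarith)
                    rw [he]; nlinarith
                  linarith
                have hall : ∀ k : Fin n, m < lineL n s k (xs - ε) := by
                  intro k
                  have hshift : lineL n s k (xs - ε) = lineL n s k xs - slopeL n k * ε := by
                    rw [lineL, lineL]; ring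
                  by_cases hk : lineL n s k xs = m
                  · have hslk : slopeL n k < 0 := by
                      rcases lt_trichotomy (slopeL n k) 0 with h | h | h
                      · exact h
                      · exact absurd h (hA k hk)
                      · exact absurd h (not_lt.mpr (hP k hk))
                    rw [hshift, hk]
                    nlinarith
                  · have hkT : k ∈ T := by rw [hT]; simp [hk]
                    have hgap : δ ≤ lineL n s k xs - m := Finset.inf'_le _ hkT
                    have hub : slopeL n k * ε ≤ (n:ℝ) * ε :=
                      mul_le_mul_of_nonneg_right (slope_ub n k) (le_of_lt hεpos)
                    rw [hshift]
                    linarith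
                obtain ⟨k1, hk1⟩ := hgex (xs - ε)
                have := hglobal (xs - ε) (by linarith)
                rw [hk1] at this
                exact absurd this (not_le.mpr (hall k1))
        · -- no active negative slope; derive contradiction by moving right
          exfalso
          push_neg at hA hN
          set T := Finset.univ.filter (fun k : Fin n => lineL n s k xs ≠ m) with hT
          rcases T.eq_empty_or_nonempty with hTe | hTne
          · have hklact : lineL n s kl xs = m := by
              by_contra hne
              have : kl ∈ T := by rw [hT]; simp [hne]
              rw [hTe] at this; exact absurd this (Finset.notMem_empty _)
            have := hN kl hklact
            rw [hslope_last] at this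
            linarith
          · set δ : ℝ := T.inf' hTne (fun k => lineL n s k xs - m) with hδ
            have hδpos : 0 < δ := by
              rw [hδ, Finset.lt_inf'_iff]
              intro k hk
              rw [hT, Finset.mem_filter] at hk
              have := hgle xs k
              rcases lt_or_eq_of_le this with h | h
              · linarith
              · exact absurd h.symm hk.2
            set ε : ℝ := δ / ((n:ℝ) + 1) with hε
            have hεpos : 0 < ε := by positivity
            have hεδ : (n:ℝ) * ε < δ := by
              have he : (n:ℝ) * ε = ((n:ℝ)/((n:ℝ)+1)) * δ := by rw [hε]; ring
              have hfrac : (n:ℝ) / ((n:ℝ)+1) < 1 :=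
                (div_lt_one (by linarith)).mpr (by linarith)
              rw [he]; nlinarith
            have hall : ∀ k : Fin n, m < lineL n s k (xs + ε) := by
              intro k
              have hshift : lineL n s k (xs + ε) = lineL n s k xs + slopeL n k * ε := by
                rw [lineL, lineL]; ring
              by_cases hk : lineL n s k xs = m
              · have hslk : 0 < slopeL n k := by
                  rcases lt_trichotomy (slopeL n k) 0 with h | h | h
                  · exact absurd h (not_lt.mpr (hN k hk))
                  · exact absurd h (hA k hk)
                  · exact h
                rw [hshift, hk]
                nlinarith
              · have hkT : k ∈ T := by rw [hT]; simp [hk]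
                have hgap : δ ≤ lineL n s k xs - m := Finset.inf'_le _ hkT
                have hlb : -(n:ℝ) * ε ≤ slopeL n k * ε :=
                  mul_le_mul_of_nonneg_right (slope_lb n k) (le_of_lt hεpos)
                rw [hshift]
                linarith
            obtain ⟨k1, hk1⟩ := hgex (xs + ε)
            have := hglobal (xs + ε) (by linarith)
            rw [hk1] at this
            exact absurd this (not_le.mpr (hall k1))
    obtain ⟨p, hp⟩ := hpair
    exact le_trans (ciInf_le ((Set.finite_range _).bddBelow) p) hp

end lines

section glue
variable (n : ℕ) (hn : 2 ≤ n) (A : Matrix (Fin n) (Fin n) ℝ)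
  (y : Fin n → Fin (n - 1) → ℝ) (e : ∀ i : Fin n, Fin (n - 1) ≃ {j : Fin n // j ≠ i})
  (hy : ∀ i k, y i k = A i (e i k).1)

include hn e hy in
lemma envelope_eq (hmono : ∀ i, Monotone (y i)) (x : ℝ) (hx : 0 ≤ x) :
    (⨅ i, gershLower n A x i) = ⨅ k : Fin n, lineL n (sK n A y) k x := by
  classical
  haveI : NeZero n := ⟨by omega⟩
  have hbdd1 : BddBelow (Set.range fun i : Fin n => gershLower n A x i) :=
    (Set.finite_range _).bddBelow
  have hbdd2 : BddBelow (Set.range fun k : Fin n => lineL n (sK n A y) k x) :=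
    (Set.finite_range _).bddBelow
  apply le_antisymm
  · apply le_ciInf
    intro k
    obtain ⟨i0, hi0⟩ := Finite.exists_min (fun i : Fin n => A i i + deltaIK n y i k)
    have hsk : sK n A y k = A i0 i0 + deltaIK n y i0 k :=
      le_antisymm (ciInf_le ((Set.finite_range _).bddBelow) i0) (le_ciInf hi0)
    calc (⨅ i, gershLower n A x i) ≤ gershLower n A x i0 := ciInf_le hbdd1 i0
      _ ≤ A i0 i0 + deltaIK n y i0 k + ((n : ℝ) - 2 * ((k : ℕ) + 1)) * x :=
          piece_le n hn A y e hy i0 k x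
      _ = lineL n (sK n A y) k x := by rw [lineL, slopeL, hsk]
  · apply le_ciInf
    intro i
    obtain ⟨k, hk⟩ := piece_eq n hn A y e hy i (hmono i) x hx
    calc (⨅ k : Fin n, lineL n (sK n A y) k x) ≤ lineL n (sK n A y) k x := ciInf_le hbdd2 k
      _ ≤ A i i + deltaIK n y i k + ((n : ℝ) - 2 * ((k : ℕ) + 1)) * x := by
          rw [lineL, slopeL]
          have : sK n A y k ≤ A i i + deltaIK n y i k :=
            ciInf_le ((Set.finite_range _).bddBelow) i
          linarith
      _ = gershLower n A x i := hk.symm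

include hn e hy in
lemma sK_strict_mono (hpos : ∀ i j : Fin n, i ≠ j → 0 < A i j) (k : Fin n)
    (hk : k ≠ (⟨0, by omega⟩ : Fin n)) :
    sK n A y (⟨0, by omega⟩ : Fin n) < sK n A y k := by
  classical
  haveI : NeZero n := ⟨by omega⟩
  set k0 : Fin n := ⟨0, by omega⟩ with hk0
  have hkpos : 0 < (k : ℕ) := by
    rcases Nat.eq_zero_or_pos (k : ℕ) with h | h
    · exact absurd (Fin.ext h : k = k0) hk
    · exact h
  have hdelta : ∀ i, deltaIK n y i k0 < deltaIK n y i k := by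
    intro i
    have hpos_y : ∀ j : Fin (n-1), 0 < y i j := fun j => by
      rw [hy]; exact hpos i _ (Ne.symm (e i j).2)
    have h0 : deltaIK n y i k0 = - ∑ j : Fin (n-1), y i j := by
      rw [deltaIK]
      have h1 : ((Finset.univ : Finset (Fin (n-1))).filter fun j : Fin (n-1) =>
          (j : ℕ) < (k0 : ℕ)) = ∅ := by
        apply Finset.filter_false_of_mem; intro j _; simp [hk0]
      have h2 : ((Finset.univ : Finset (Fin (n-1))).filter fun j : Fin (n-1) =>
          (k0 : ℕ) ≤ (j : ℕ)) = Finset.univ := by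
        apply Finset.filter_true_of_mem; intro j _; simp [hk0]
      rw [h1, h2, Finset.sum_empty]; ring
    have hsplit : ∑ j : Fin (n - 1), y i j =
        (∑ j ∈ (Finset.univ : Finset (Fin (n-1))).filter
            (fun j : Fin (n-1) => (j : ℕ) < (k : ℕ)), y i j) +
        ∑ j ∈ (Finset.univ : Finset (Fin (n-1))).filter
            (fun j : Fin (n-1) => (k : ℕ) ≤ (j : ℕ)), y i j := by
      rw [← Finset.sum_filter_add_sum_filter_not Finset.univ
        (fun j : Fin (n-1) => (j : ℕ) < (k : ℕ))]
      congr 1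
      apply Finset.sum_congr _ (fun _ _ => rfl)
      apply Finset.filter_congr; intro j _; simp [not_lt]
    have hS1pos : 0 < ∑ j ∈ (Finset.univ : Finset (Fin (n-1))).filter
        (fun j : Fin (n-1) => (j : ℕ) < (k : ℕ)), y i j := by
      apply Finset.sum_pos (fun j _ => hpos_y j)
      refine ⟨⟨0, by omega⟩, ?_⟩
      simp [hkpos]
    rw [h0, deltaIK]
    linarith [hsplit, hS1pos]
  obtain ⟨i0, hi0⟩ := Finite.exists_min (fun i : Fin n => A i i + deltaIK n y i k)
  have hsk : sK n A y k = A i0 i0 + deltaIK n y i0 k :=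
    le_antisymm (ciInf_le ((Set.finite_range _).bddBelow) i0) (le_ciInf hi0)
  calc sK n A y k0 ≤ A i0 i0 + deltaIK n y i0 k0 :=
        ciInf_le ((Set.finite_range _).bddBelow) i0
    _ < A i0 i0 + deltaIK n y i0 k := by linarith [hdelta i0]
    _ = sK n A y k := hsk.symm

end glue

/-- Closed form for the shifted Gershgorin lower bound of a symmetric matrix with strictly
positive off-diagonal entries:
`sup_{x≥0} min_i d_i(A,x) = min_{1 ≤ k ≤ n/2 < l ≤ n} ((n/2 − k)s_l + (l − n/2)s_k)/(l − k)`
(pairs `(k,l) : Fin n × Fin n` carry paper indices `k+1`, `l+1`). -/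
theorem shifted_gershgorin_closed_form (n : ℕ) (hn : 2 ≤ n)
    (A : Matrix (Fin n) (Fin n) ℝ) (hA : A.IsSymm)
    (hpos : ∀ i j : Fin n, i ≠ j → 0 < A i j)
    (y : Fin n → Fin (n - 1) → ℝ) (e : ∀ i : Fin n, Fin (n - 1) ≃ {j : Fin n // j ≠ i})
    (hy : ∀ i k, y i k = A i (e i k).1) (hmono : ∀ i, Monotone (y i)) :
    (⨆ x : {x : ℝ // 0 ≤ x}, ⨅ i, gershLower n A x.1 i) =
      ⨅ p : {p : Fin n × Fin n //
          ((p.1 : ℕ) + 1 : ℝ) ≤ (n : ℝ) / 2 ∧ (n : ℝ) / 2 < ((p.2 : ℕ) + 1 : ℝ)},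
        (((n : ℝ) / 2 - ((p.1.1 : ℕ) + 1)) * sK n A y p.1.2 +
          (((p.1.2 : ℕ) + 1) - (n : ℝ) / 2) * sK n A y p.1.1) /
          ((((p.1.2 : ℕ) + 1) : ℝ) - (((p.1.1 : ℕ) + 1) : ℝ)) := by
  classical
  haveI : NeZero n := ⟨by omega⟩
  have hL : (⨆ x : {x : ℝ // 0 ≤ x}, ⨅ i, gershLower n A x.1 i)
      = ⨆ x : {x : ℝ // 0 ≤ x}, ⨅ k : Fin n, lineL n (sK n A y) k x.1 :=
    iSup_congr (fun x => envelope_eq n hn A y e hy hmono x.1 x.2)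
  rw [hL]
  exact lines_sup_eq n hn (sK n A y) ⟨0, by omega⟩ rfl
    (fun k hk => sK_strict_mono n hn A y e hy hpos k hk)
end

section
/- Let A be an n×n real symmetric matrix (n ≥ 2) all of whose diagonal entries equal a common value q. Then for every real x, min_{i≠j} (1/2)(d_i(A,x) + d_j(A,x)) = min_{1≤k≤2n−1} (p_k x + q_k), where p_k = n − 1 − k and q_k = min_{i≠j} ( q + (1/2)(Σ_{m<k} y_m − Σ_{m≥k} y_m) ), with y_1 ≤ … ≤ y_{2n−2} the off-diagonal entries of rows i and j of A arranged together in nondecreasing order. That is, the averaged shifted Gershgorin bounding function is piecewise linear, cut out by 2n−1 lines. -/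
/-- `δ_{i,j,k} = Σ_{m<k} y_m − Σ_{m≥k} y_m` for the merged sorted off-diagonal entries
`y i j` of rows `i` and `j` (here `k : Fin (2n−1)` has paper index `k+1`). -/
noncomputable def deltaIJK (n : ℕ) (y : Fin n → Fin n → Fin (2 * n - 2) → ℝ)
    (i j : Fin n) (k : Fin (2 * n - 1)) : ℝ :=
  (∑ m ∈ Finset.univ.filter (fun m : Fin (2 * n - 2) => (m : ℕ) < (k : ℕ)), y i j m) -
  (∑ m ∈ Finset.univ.filter (fun m : Fin (2 * n - 2) => (k : ℕ) ≤ (m : ℕ)), y i j m)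

lemma card_filter_val_lt_s12 (N K : ℕ) (h : K ≤ N) :
    (Finset.univ.filter (fun m : Fin N => (m : ℕ) < K)).card = K := by
  rw [Finset.card_filter]
  rw [Fin.sum_univ_eq_sum_range (fun m => if m < K then 1 else 0) N]
  rw [← Finset.card_filter]
  have : (Finset.range N).filter (fun m => m < K) = Finset.range K := by
    ext m; simp only [Finset.mem_filter, Finset.mem_range]; omega
  rw [this, Finset.card_range]

/-- Piecewise-linear structure of the averaged shifted Gershgorin bound for a symmetric
matrix with constant diagonal `q`: with `y i j` listing the `2n−2` off-diagonal entries of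
rows `i` and `j` in nondecreasing order, `p_k = n − 1 − k` and
`q_k = min_{i≠j} (q + δ_{i,j,k}/2)` (paper index `k+1` for `k : Fin (2n−1)`), one has for
every real `x`: `min_{i≠j} (d_i(A,x) + d_j(A,x))/2 = min_{1≤k≤2n−1} (p_k x + q_k)`. -/
theorem averaged_gershgorin_piecewise_linear (n : ℕ) (hn : 2 ≤ n)
    (A : Matrix (Fin n) (Fin n) ℝ) (hA : A.IsSymm)
    (q : ℝ) (hq : ∀ i, A i i = q)
    (y : Fin n → Fin n → Fin (2 * n - 2) → ℝ)
    (e : ∀ i j : Fin n, i ≠ j →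
      (Fin (2 * n - 2) ≃ ({k : Fin n // k ≠ i} ⊕ {k : Fin n // k ≠ j})))
    (hy : ∀ (i j : Fin n) (h : i ≠ j) (m : Fin (2 * n - 2)),
      y i j m = Sum.elim (fun k : {k : Fin n // k ≠ i} => A i k.1)
        (fun k : {k : Fin n // k ≠ j} => A j k.1) (e i j h m))
    (hmono : ∀ i j : Fin n, i ≠ j → Monotone (y i j)) (x : ℝ) :
    (⨅ p : {p : Fin n × Fin n // p.1 ≠ p.2},
        (1 / 2) * (gershLower n A x p.1.1 + gershLower n A x p.1.2)) =
      ⨅ k : Fin (2 * n - 1),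
        (((n : ℝ) - 1 - ((k : ℕ) + 1)) * x +
          ⨅ p : {p : Fin n × Fin n // p.1 ≠ p.2},
            (q + deltaIJK n y p.1.1 p.1.2 k / 2)) := by
  haveI hP : Nonempty {p : Fin n × Fin n // p.1 ≠ p.2} :=
    ⟨⟨(⟨0, by omega⟩, ⟨1, by omega⟩), by simp [Fin.ext_iff]⟩⟩
  haveI hK : Nonempty (Fin (2 * n - 1)) := ⟨⟨0, by omega⟩⟩
  -- abbreviations
  obtain ⟨S, hS⟩ : ∃ S : Fin n → Fin n → ℝ, ∀ i j, S i j = ∑ m, |y i j m - x| :=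
    ⟨_, fun _ _ => rfl⟩
  obtain ⟨T, hT⟩ : ∃ T : Fin n → Fin n → Fin (2 * n - 1) → ℝ, ∀ i j k, T i j k =
      (∑ m ∈ Finset.univ.filter (fun m : Fin (2 * n - 2) => (m : ℕ) < (k : ℕ)), (x - y i j m)) +
      (∑ m ∈ Finset.univ.filter (fun m : Fin (2 * n - 2) => (k : ℕ) ≤ (m : ℕ)), (y i j m - x)) :=
    ⟨_, fun _ _ _ => rfl⟩
  -- averaged Gershgorin equals q - x - S/2
  have hf : ∀ (i j : Fin n), i ≠ j →
      (1 / 2) * (gershLower n A x i + gershLower n A x j) = q - x - S i j / 2 := by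
    intro i j h
    rw [hS] at *
    have hsum : (∑ m, |y i j m - x|) =
        (∑ k ∈ Finset.univ.erase i, |A i k - x|) + (∑ k ∈ Finset.univ.erase j, |A j k - x|) := by
      have h1 : (∑ m, |y i j m - x|) = ∑ m : Fin (2 * n - 2),
          |Sum.elim (fun k : {k : Fin n // k ≠ i} => A i k.1)
            (fun k : {k : Fin n // k ≠ j} => A j k.1) (e i j h m) - x| := by
        apply Finset.sum_congr rfl
        intro m _; rw [hy i j h m]
      rw [h1, Equiv.sum_comp (e i j h)
        (fun s => |Sum.elim (fun k : {k : Fin n // k ≠ i} => A i k.1)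
            (fun k : {k : Fin n // k ≠ j} => A j k.1) s - x|)]
      rw [Fintype.sum_sum_type]
      congr 1
      · exact (Finset.sum_subtype _ (by simp) (fun k => |A i k - x|)).symm
      · exact (Finset.sum_subtype _ (by simp) (fun k => |A j k - x|)).symm
    simp only [gershLower, hq, hsum]
    ring
  -- T ≤ S
  have hTS : ∀ (i j : Fin n) (k : Fin (2 * n - 1)), T i j k ≤ S i j := by
    intro i j k
    have := Finset.sum_filter_add_sum_filter_not Finset.univ
      (fun m : Fin (2 * n - 2) => (m : ℕ) < (k : ℕ)) (fun m => |y i j m - x|)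
    have hnot : Finset.univ.filter (fun m : Fin (2 * n - 2) => ¬ (m : ℕ) < (k : ℕ)) =
        Finset.univ.filter (fun m : Fin (2 * n - 2) => (k : ℕ) ≤ (m : ℕ)) := by
      apply Finset.filter_congr; intro m _; simp [not_lt]
    rw [hnot] at this
    rw [hS i j, hT i j k]
    rw [← this]
    apply add_le_add
    · apply Finset.sum_le_sum; intro m _
      rw [abs_sub_comm]; exact le_abs_self _
    · apply Finset.sum_le_sum; intro m _
      exact le_abs_self _
  -- line identity
  have hline : ∀ (i j : Fin n) (k : Fin (2 * n - 1)),
      ((n : ℝ) - 1 - ((k : ℕ) + 1)) * x + (q + deltaIJK n y i j k / 2) =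
        q - x - T i j k / 2 := by
    intro i j k
    have hk2 : (k : ℕ) ≤ 2 * n - 2 := by omega
    have hc1 : (Finset.univ.filter (fun m : Fin (2 * n - 2) => (m : ℕ) < (k : ℕ))).card
        = (k : ℕ) := card_filter_val_lt_s12 _ _ hk2
    have hc2 : (Finset.univ.filter (fun m : Fin (2 * n - 2) => (k : ℕ) ≤ (m : ℕ))).card
        = 2 * n - 2 - (k : ℕ) := by
      have hnot : Finset.univ.filter (fun m : Fin (2 * n - 2) => (k : ℕ) ≤ (m : ℕ)) =
          Finset.univ.filter (fun m : Fin (2 * n - 2) => ¬ (m : ℕ) < (k : ℕ)) := by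
        apply Finset.filter_congr; intro m _; simp [not_lt]
      have := Finset.card_filter_add_card_filter_not
        (s := (Finset.univ : Finset (Fin (2 * n - 2))))
        (p := fun m : Fin (2 * n - 2) => (m : ℕ) < (k : ℕ))
      rw [hnot]
      simp only [Finset.card_univ, Fintype.card_fin] at this ⊢
      omega
    have hT' : T i j k = (k : ℕ) * x - (∑ m ∈ Finset.univ.filter
          (fun m : Fin (2 * n - 2) => (m : ℕ) < (k : ℕ)), y i j m)
        + ((∑ m ∈ Finset.univ.filter
          (fun m : Fin (2 * n - 2) => (k : ℕ) ≤ (m : ℕ)), y i j m)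
          - (2 * n - 2 - (k : ℕ) : ℕ) * x) := by
      rw [hT]
      simp only [Finset.sum_sub_distrib, Finset.sum_const, nsmul_eq_mul, hc1, hc2]
      try ring
    rw [hT', deltaIJK]
    have hcast : ((2 * n - 2 - (k : ℕ) : ℕ) : ℝ) = 2 * (n : ℝ) - 2 - (k : ℕ) := by
      have : ((2 * n - 2 - (k : ℕ) : ℕ) : ℝ) = ((2 * n : ℕ) : ℝ) - 2 - (k : ℕ) := by
        push_cast [Nat.sub_sub, Nat.cast_sub (by omega : 2 + (k:ℕ) ≤ 2 * n)]
        ring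
      rw [this]; push_cast; ring
    rw [hcast]
    ring
  -- existence of the touching line
  have hkey : ∀ (i j : Fin n), i ≠ j → ∃ k : Fin (2 * n - 1), T i j k = S i j := by
    intro i j h
    set K : ℕ := (Finset.univ.filter (fun m : Fin (2 * n - 2) => y i j m < x)).card with hKdef
    have hKle : K ≤ 2 * n - 2 := by
      have := Finset.card_filter_le (Finset.univ : Finset (Fin (2 * n - 2)))
        (fun m : Fin (2 * n - 2) => y i j m < x)
      simpa using this
    refine ⟨⟨K, by omega⟩, ?_⟩
    have hfe : Finset.univ.filter (fun m : Fin (2 * n - 2) => (m : ℕ) < K) =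
        Finset.univ.filter (fun m : Fin (2 * n - 2) => y i j m < x) := by
      ext m
      simp only [Finset.mem_filter, Finset.mem_univ, true_and]
      constructor
      · intro hm
        by_contra hge
        push_neg at hge
        have hsub : Finset.univ.filter (fun m' : Fin (2 * n - 2) => y i j m' < x) ⊆
            Finset.Iio m := by
          intro m' hm'
          simp only [Finset.mem_filter] at hm'
          rw [Finset.mem_Iio]
          by_contra hge'
          push_neg at hge'
          exact absurd (lt_of_lt_of_le hm'.2 hge) (not_lt.mpr (hmono i j h hge'))
        have := Finset.card_le_card hsub
        rw [Fin.card_Iio] at this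
        omega
      · intro hm
        have hsub : Finset.Iic m ⊆
            Finset.univ.filter (fun m' : Fin (2 * n - 2) => y i j m' < x) := by
          intro m' hm'
          rw [Finset.mem_Iic] at hm'
          simp only [Finset.mem_filter, Finset.mem_univ, true_and]
          exact lt_of_le_of_lt (hmono i j h hm') hm
        have := Finset.card_le_card hsub
        rw [Fin.card_Iic] at this
        omega
    have hnot : Finset.univ.filter (fun m : Fin (2 * n - 2) => K ≤ (m : ℕ)) =
        Finset.univ.filter (fun m : Fin (2 * n - 2) => ¬ y i j m < x) := by
      ext m
      have hmem := Finset.ext_iff.mp hfe m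
      simp only [Finset.mem_filter, Finset.mem_univ, true_and] at hmem ⊢
      constructor
      · intro h1 h2
        have := hmem.mpr h2
        omega
      · intro h1
        by_contra h2
        push_neg at h2
        exact h1 (hmem.mp h2)
    rw [hT, hS]
    rw [hfe, hnot]
    rw [← Finset.sum_filter_add_sum_filter_not Finset.univ
      (fun m : Fin (2 * n - 2) => y i j m < x) (fun m => |y i j m - x|)]
    congr 1
    · apply Finset.sum_congr rfl
      intro m hm
      simp only [Finset.mem_filter] at hm
      rw [abs_of_neg (by linarith [hm.2])]; ring
    · apply Finset.sum_congr rfl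
      intro m hm
      simp only [Finset.mem_filter] at hm
      rw [abs_of_nonneg (by simp at hm; linarith [hm])]
  -- bddBelow facts
  have hbP1 : BddBelow (Set.range (fun p : {p : Fin n × Fin n // p.1 ≠ p.2} =>
      (1 / 2) * (gershLower n A x p.1.1 + gershLower n A x p.1.2))) :=
    Finite.bddBelow_range _
  have hbK : BddBelow (Set.range (fun k : Fin (2 * n - 1) =>
      (((n : ℝ) - 1 - ((k : ℕ) + 1)) * x +
        ⨅ p : {p : Fin n × Fin n // p.1 ≠ p.2},
          (q + deltaIJK n y p.1.1 p.1.2 k / 2)))) := Finite.bddBelow_range _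
  have hbP2 : ∀ k : Fin (2 * n - 1), BddBelow (Set.range
      (fun p : {p : Fin n × Fin n // p.1 ≠ p.2} =>
        (q + deltaIJK n y p.1.1 p.1.2 k / 2))) := fun _ => Finite.bddBelow_range _
  apply le_antisymm
  · apply le_ciInf
    intro k
    rw [← sub_le_iff_le_add']
    apply le_ciInf
    intro p
    rw [sub_le_iff_le_add']
    calc (⨅ p : {p : Fin n × Fin n // p.1 ≠ p.2},
            (1 / 2) * (gershLower n A x p.1.1 + gershLower n A x p.1.2))
        ≤ (1 / 2) * (gershLower n A x p.1.1 + gershLower n A x p.1.2) := ciInf_le hbP1 p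
      _ = q - x - S p.1.1 p.1.2 / 2 := hf _ _ p.2
      _ ≤ q - x - T p.1.1 p.1.2 k / 2 := by
          have h' : T p.1.1 p.1.2 k ≤ S p.1.1 p.1.2 := hTS p.1.1 p.1.2 k
          linarith
      _ = ((n : ℝ) - 1 - ((k : ℕ) + 1)) * x + (q + deltaIJK n y p.1.1 p.1.2 k / 2) :=
          (hline _ _ _).symm
  · apply le_ciInf
    intro p
    obtain ⟨k, hk⟩ := hkey p.1.1 p.1.2 p.2
    calc (⨅ k : Fin (2 * n - 1), (((n : ℝ) - 1 - ((k : ℕ) + 1)) * x +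
            ⨅ p : {p : Fin n × Fin n // p.1 ≠ p.2}, (q + deltaIJK n y p.1.1 p.1.2 k / 2)))
        ≤ ((n : ℝ) - 1 - ((k : ℕ) + 1)) * x +
            ⨅ p : {p : Fin n × Fin n // p.1 ≠ p.2}, (q + deltaIJK n y p.1.1 p.1.2 k / 2) :=
          ciInf_le hbK k
      _ ≤ ((n : ℝ) - 1 - ((k : ℕ) + 1)) * x + (q + deltaIJK n y p.1.1 p.1.2 k / 2) :=
          add_le_add_right (ciInf_le (hbP2 k) p) _
      _ = q - x - T p.1.1 p.1.2 k / 2 := hline _ _ _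
      _ = q - x - S p.1.1 p.1.2 / 2 := by rw [hk]
      _ = (1 / 2) * (gershLower n A x p.1.1 + gershLower n A x p.1.2) := (hf _ _ p.2).symm
end
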